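/- arXiv:2005.09879 — 4 statements merged into one kernel-verified Lean document; each statement's English description precedes it below -/
import Mathlib

section
/- Let 0 ≤ σ₁ ≤ σ₂ be real numbers and let Σ be the 2×2 diagonal matrix with entries σ₁, σ₂. Then for every θ ∈ ℝ, 14 · ∑_{k=0}^{5} (|Σ R_{θ + kπ/3} e₁| − 1)² ≥ (σ₁ − 1)² + (σ₂ − 1)², where R_α denotes the counterclockwise rotation matrix by angle α and e₁ = (1,0). -/
open Real Finset

noncomputable def vnorm (v : Fin 2 → ℝ) : ℝ := Real.sqrt (∑ i, (v i)^2)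

noncomputable def Rot (α : ℝ) : Matrix (Fin 2) (Fin 2) ℝ :=
  !![Real.cos α, -Real.sin α; Real.sin α, Real.cos α]

def e1 : Fin 2 → ℝ := ![1, 0]

set_option maxHeartbeats 4000000


lemma caseA' (s S u v : ℝ) (h0 : 0 ≤ s) (h12 : s ≤ S) (hc : S ≤ 1)
    (hu1' : u ≤ 1) (hvS : v ≤ S)
    (hu2 : 4*u^2 ≤ 3*s^2 + S^2) :
    (s-1)^2 + (S-1)^2 ≤ 14*((u-1)^2 + (v-1)^2) := by
  have hs1 : s ≤ 1 := le_trans h12 hc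
  have key : (3:ℝ)/8 * (1-s) ≤ 1-u := by
    nlinarith [mul_nonneg h0 (sub_nonneg.2 hs1)]
  have hA : (9:ℝ)/64 * (1-s)^2 ≤ (u-1)^2 := by nlinarith
  have hB : (1-S)^2 ≤ (v-1)^2 := by nlinarith
  nlinarith

lemma caseB' (s S u v : ℝ) (hd : 1 ≤ s) (h12 : s ≤ S) (hsu : s ≤ u)
    (hv : 0 ≤ v) (hv1 : s^2 + 3*S^2 ≤ 4*v^2) :
    (s-1)^2 + (S-1)^2 ≤ 14*((u-1)^2 + (v-1)^2) := by
  have hA : (s-1)^2 ≤ (u-1)^2 := by nlinarith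
  have hbv : s + 3*S ≤ 4*v := by nlinarith [sq_nonneg (4*v - s - 3*S), sq_nonneg (s-S)]
  have hB : (9:ℝ)/16 * (S-1)^2 ≤ (v-1)^2 := by nlinarith
  nlinarith

lemma caseC1' (s S u v : ℝ) (h0 : 0 ≤ s) (hd : s ≤ 1) (hc : 1 ≤ S)
    (hv1' : v ≤ 1) (hu1' : u ≤ 1)
    (haU : 4 - 3*s^2 - S^2 ≤ 8*(1-u)) (hlin : S - s ≤ 4*(v-u))
    (hs3 : s + 3*S ≤ 4) :
    (s-1)^2 + (S-1)^2 ≤ 14*((u-1)^2 + (v-1)^2) := by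
  nlinarith [sq_nonneg (1-u), sq_nonneg (1-v), sq_nonneg (S-s), sq_nonneg (1-s),
    sq_nonneg (S-1), mul_nonneg (sub_nonneg.2 hd) (sub_nonneg.2 hc),
    sq_nonneg (1-u-(1-v)), mul_nonneg (sub_nonneg.2 hv1') (sub_nonneg.2 hc),
    mul_nonneg (sub_nonneg.2 hu1') (sub_nonneg.2 hc)]

lemma caseC2a' (s S u v : ℝ) (h0 : 0 ≤ s) (hd : s ≤ 1) (hc : 1 ≤ S)
    (hu1' : u ≤ 1) (hv1' : 1 ≤ v) (h4 : 3*s^2 + S^2 ≤ 4) (hB : 4 ≤ s^2 + 3*S^2)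
    (haU : 4 - 3*s^2 - S^2 ≤ 8*(1-u))
    (hbS : s^2 + 3*S^2 - 4 ≤ 4*(S+1)*(v-1)) :
    (s-1)^2 + (S-1)^2 ≤ 14*((u-1)^2 + (v-1)^2) := by
  have hS2 : S ≤ 2 := by nlinarith
  have hA : (0:ℝ) ≤ 4 - 3*s^2 - S^2 := by linarith
  have hB' : (0:ℝ) ≤ s^2 + 3*S^2 - 4 := by linarith
  have ha2 : (4 - 3*s^2 - S^2)^2 ≤ 64*(1-u)^2 := by nlinarith
  have hb2 : (s^2 + 3*S^2 - 4)^2 ≤ 144*(v-1)^2 := by nlinarith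
  have hp : (0:ℝ) ≤ 1 - s := by linarith
  have hq : (0:ℝ) ≤ S - 1 := by linarith
  have key : (s-1)^2 + (S-1)^2 ≤ 7/32*(4 - 3*s^2 - S^2)^2 + 7/72*(s^2 + 3*S^2 - 4)^2 := by
    nlinarith [mul_nonneg hq hA, mul_nonneg hq (sq_nonneg (2*(1-s)-5*(S-1))),
      mul_nonneg hp hB', mul_nonneg hp hA, sq_nonneg (4-3*s^2-S^2),
      mul_nonneg (sq_nonneg (1-s)) hB', mul_nonneg (sq_nonneg ((1-s)-(S-1))) h0,
      sq_nonneg (S-1)]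
  nlinarith [key, ha2, hb2]

lemma caseC2b' (s S u v : ℝ) (h0 : 0 ≤ s) (hd : s ≤ 1) (hc : 1 ≤ S)
    (hu1' : u ≤ 1) (h4 : 3*s^2 + S^2 ≤ 4) (hC : s^2 + 3*S^2 ≤ 4)
    (haU : 4 - 3*s^2 - S^2 ≤ 8*(1-u)) :
    (s-1)^2 + (S-1)^2 ≤ 14*((u-1)^2 + (v-1)^2) := by
  have hA : (0:ℝ) ≤ 4 - 3*s^2 - S^2 := by linarith
  have hC' : (0:ℝ) ≤ 4 - s^2 - 3*S^2 := by linarith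
  have hq : (0:ℝ) ≤ S - 1 := by linarith
  have ha2 : (4 - 3*s^2 - S^2)^2 ≤ 64*(1-u)^2 := by nlinarith
  have key : (s-1)^2 + (S-1)^2 ≤ 7/32*(4 - 3*s^2 - S^2)^2 := by
    nlinarith [mul_nonneg (sq_nonneg (S-1)) hA, mul_nonneg hA hC',
      mul_nonneg (sq_nonneg (S-1)) hC', mul_nonneg hq hC',
      mul_nonneg (sq_nonneg (S-1)) hq, sq_nonneg (4-3*s^2-S^2)]
  nlinarith [key, ha2, sq_nonneg (v-1)]

lemma caseC3' (s S u v : ℝ) (h0 : 0 ≤ s) (hd : s ≤ 1) (hc : 1 ≤ S)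
    (hv1' : 1 ≤ v) (hS4 : 4 ≤ 3*s^2 + S^2)
    (hbS : s^2 + 3*S^2 - 4 ≤ 4*(S+1)*(v-1)) :
    (s-1)^2 + (S-1)^2 ≤ 14*((u-1)^2 + (v-1)^2) := by
  nlinarith [sq_nonneg (u-1), sq_nonneg (v-1), sq_nonneg (1-s), sq_nonneg (S-1),
    mul_nonneg (sub_nonneg.2 hd) (sub_nonneg.2 hc),
    mul_nonneg (sub_nonneg.2 hv1') (sub_nonneg.2 hc),
    mul_nonneg (mul_nonneg (sub_nonneg.2 hv1') (sub_nonneg.2 hc)) (sub_nonneg.2 hc),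
    mul_nonneg (sub_nonneg.2 hv1') (sub_nonneg.2 hv1')]

theorem core (s S u v : ℝ) (h0 : 0 ≤ s) (h12 : s ≤ S) (hu : 0 ≤ u) (hv : 0 ≤ v)
    (hu1 : s^2 ≤ u^2) (hu2 : 4*u^2 ≤ 3*s^2 + S^2)
    (hv1 : s^2 + 3*S^2 ≤ 4*v^2) (hv2 : v^2 ≤ S^2) :
    (s-1)^2 + (S-1)^2 ≤ 14*((u-1)^2 + (v-1)^2) := by
  have hS : 0 ≤ S := le_trans h0 h12
  have huS : u ≤ S := by nlinarith
  have hvS : v ≤ S := by nlinarith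
  have hsu : s ≤ u := by nlinarith
  have huv : u ≤ v := by nlinarith
  rcases le_total S 1 with hc | hc
  · exact caseA' s S u v h0 h12 hc (le_trans huS hc) hvS hu2
  rcases le_total 1 s with hd | hd
  · exact caseB' s S u v hd h12 hsu hv hv1
  have hSpos : (0:ℝ) < S := lt_of_lt_of_le one_pos hc
  have hlin : S - s ≤ 4*(v-u) := by
    nlinarith [mul_nonneg (mul_nonneg hS h0) (sub_nonneg.2 h12)]
  rcases le_total v 1 with hv1' | hv1'
  · have hu1' : u ≤ 1 := le_trans huv hv1'
    have haU : 4 - 3*s^2 - S^2 ≤ 8*(1-u) := by nlinarith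
    have hbv : s + 3*S ≤ 4*v := by nlinarith [sq_nonneg (4*v - s - 3*S), sq_nonneg (s-S)]
    exact caseC1' s S u v h0 hd hc hv1' hu1' haU hlin (by linarith)
  · have hbS : s^2 + 3*S^2 - 4 ≤ 4*(S+1)*(v-1) := by
      nlinarith [mul_nonneg (sub_nonneg.2 hv1') (sub_nonneg.2 hvS)]
    rcases le_total (3*s^2 + S^2) 4 with h4 | h4
    · have hu1' : u ≤ 1 := by nlinarith
      have haU : 4 - 3*s^2 - S^2 ≤ 8*(1-u) := by nlinarith
      rcases le_total (s^2 + 3*S^2) 4 with hC | hC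
      · exact caseC2b' s S u v h0 hd hc hu1' h4 hC haU
      · exact caseC2a' s S u v h0 hd hc hu1' hv1' h4 hC haU hbS
    · exact caseC3' s S u v h0 hd hc hv1' h4 hbS



lemma cos_shift1 (θ : ℝ) : Real.cos (θ + π/3) = (Real.cos θ - Real.sqrt 3 * Real.sin θ)/2 := by
  rw [Real.cos_add, Real.cos_pi_div_three, Real.sin_pi_div_three]; ring

lemma cos_shift2 (θ : ℝ) : Real.cos (θ + 2*π/3) = -(Real.cos θ + Real.sqrt 3 * Real.sin θ)/2 := by
  have h : θ + 2*π/3 = (θ + π/3) + π/3 := by ring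
  have h3 : Real.sqrt 3 ^ 2 = 3 := Real.sq_sqrt (by norm_num)
  rw [h, Real.cos_add, Real.cos_pi_div_three, Real.sin_pi_div_three, cos_shift1,
    Real.sin_add, Real.sin_pi_div_three, Real.cos_pi_div_three]
  linear_combination (-(Real.cos θ)/4) * h3

lemma trig_max (θ : ℝ) : 3/4 ≤ Real.cos θ ^ 2 ∨ 3/4 ≤ Real.cos (θ + π/3) ^ 2 ∨
    3/4 ≤ Real.cos (θ + 2*π/3) ^ 2 := by
  by_contra hcon
  push_neg at hcon
  obtain ⟨h0, h1, h2⟩ := hcon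
  set x := Real.cos θ
  set y := Real.sin θ
  set r := Real.sqrt 3 with hrdef
  have hr : r^2 = 3 := Real.sq_sqrt (by norm_num)
  have hxy : y^2 = 1 - x^2 := by
    have := Real.sin_sq_add_cos_sq θ; nlinarith
  rw [cos_shift1] at h1
  rw [cos_shift2] at h2
  have h1' : (0:ℝ) < 3 - (x - r*y)^2 := by nlinarith
  have h2' : (0:ℝ) < 3 - (x + r*y)^2 := by nlinarith
  have hprod : (3 - (x - r*y)^2) * (3 - (x + r*y)^2) = 4*x^2*(4*x^2 - 3) := by
    linear_combination (-6*y^2 - 2*x^2*y^2 + r^2*y^4 + 3*y^4) * hr +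
      (-(3*(3 - 3*y^2 + 5*x^2))) * hxy
  nlinarith [mul_pos h1' h2', sq_nonneg x]

lemma trig_min (θ : ℝ) : Real.cos θ ^ 2 ≤ 1/4 ∨ Real.cos (θ + π/3) ^ 2 ≤ 1/4 ∨
    Real.cos (θ + 2*π/3) ^ 2 ≤ 1/4 := by
  by_contra hcon
  push_neg at hcon
  obtain ⟨h0, h1, h2⟩ := hcon
  set x := Real.cos θ
  set y := Real.sin θ
  set r := Real.sqrt 3 with hrdef
  have hr : r^2 = 3 := Real.sq_sqrt (by norm_num)
  have hxy : y^2 = 1 - x^2 := by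
    have := Real.sin_sq_add_cos_sq θ; nlinarith
  rw [cos_shift1] at h1
  rw [cos_shift2] at h2
  have h1' : (0:ℝ) < (x - r*y)^2 - 1 := by nlinarith
  have h2' : (0:ℝ) < (x + r*y)^2 - 1 := by nlinarith
  have hprod : ((x - r*y)^2 - 1) * ((x + r*y)^2 - 1) = -(4*y^2*(4*x^2 - 1)) := by
    linear_combination (-2*x^2*y^2 + r^2*y^4 + 3*y^4 - 2*y^2) * hr +
      (x^2 + 9*y^2 - 1) * hxy
  nlinarith [mul_pos h1' h2', sq_nonneg y]


lemma norm_eq (s S α : ℝ) :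
    vnorm ((!![s, 0; 0, S] : Matrix (Fin 2) (Fin 2) ℝ).mulVec ((Rot α).mulVec e1))
      = Real.sqrt (s^2 * Real.cos α ^2 + S^2 * Real.sin α ^2) := by
  simp [vnorm, Rot, e1, Matrix.mulVec, dotProduct, Fin.sum_univ_two]
  ring_nf


set_option maxHeartbeats 4000000 in
theorem stmt0 (σ₁ σ₂ θ : ℝ) (h0 : 0 ≤ σ₁) (h12 : σ₁ ≤ σ₂) :
    (σ₁ - 1)^2 + (σ₂ - 1)^2 ≤
      14 * ∑ k ∈ Finset.range 6,
        (vnorm ((!![σ₁, 0; 0, σ₂] : Matrix (Fin 2) (Fin 2) ℝ).mulVec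
          ((Rot (θ + k * π / 3)).mulVec e1)) - 1)^2 := by
  set T : ℕ → ℝ := fun k =>
    (vnorm ((!![σ₁, 0; 0, σ₂] : Matrix (Fin 2) (Fin 2) ℝ).mulVec
      ((Rot (θ + k * π / 3)).mulVec e1)) - 1)^2 with hT
  obtain ⟨i, hi3, hci⟩ : ∃ k : ℕ, k < 3 ∧ 3/4 ≤ Real.cos (θ + (k:ℝ) * π / 3) ^ 2 := by
    have e0 : θ + ((0:ℕ):ℝ) * π / 3 = θ := by push_cast; ring
    have e1' : θ + ((1:ℕ):ℝ) * π / 3 = θ + π/3 := by push_cast; ring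
    have e2 : θ + ((2:ℕ):ℝ) * π / 3 = θ + 2*π/3 := by push_cast; ring
    rcases trig_max θ with h | h | h
    · exact ⟨0, by norm_num, by rw [e0]; exact h⟩
    · exact ⟨1, by norm_num, by rw [e1']; exact h⟩
    · exact ⟨2, by norm_num, by rw [e2]; exact h⟩
  obtain ⟨j, hj3, hcj⟩ : ∃ k : ℕ, k < 3 ∧ Real.cos (θ + (k:ℝ) * π / 3) ^ 2 ≤ 1/4 := by
    have e0 : θ + ((0:ℕ):ℝ) * π / 3 = θ := by push_cast; ring
    have e1' : θ + ((1:ℕ):ℝ) * π / 3 = θ + π/3 := by push_cast; ring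
    have e2 : θ + ((2:ℕ):ℝ) * π / 3 = θ + 2*π/3 := by push_cast; ring
    rcases trig_min θ with h | h | h
    · exact ⟨0, by norm_num, by rw [e0]; exact h⟩
    · exact ⟨1, by norm_num, by rw [e1']; exact h⟩
    · exact ⟨2, by norm_num, by rw [e2]; exact h⟩
  have hij : i ≠ j := by
    intro h; rw [h] at hci; linarith
  have hsum : T i + T j ≤ ∑ k ∈ Finset.range 6, T k := by
    rw [← Finset.sum_pair hij]
    apply Finset.sum_le_sum_of_subset_of_nonneg
    · intro k hk
      simp only [Finset.mem_insert, Finset.mem_singleton] at hk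
      rcases hk with rfl | rfl <;> simp [Finset.mem_range] <;> omega
    · intro k _ _; exact sq_nonneg _
  set αi := θ + (i:ℝ) * π / 3
  set αj := θ + (j:ℝ) * π / 3
  set u := Real.sqrt (σ₁^2 * Real.cos αi ^2 + σ₂^2 * Real.sin αi ^2) with hu_def
  set v := Real.sqrt (σ₁^2 * Real.cos αj ^2 + σ₂^2 * Real.sin αj ^2) with hv_def
  have hTi : T i = (u - 1)^2 := by rw [hT]; simp only; rw [norm_eq]
  have hTj : T j = (v - 1)^2 := by rw [hT]; simp only; rw [norm_eq]
  have hu0 : 0 ≤ u := Real.sqrt_nonneg _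
  have hv0 : 0 ≤ v := Real.sqrt_nonneg _
  have hu2 : u^2 = σ₁^2 * Real.cos αi ^2 + σ₂^2 * Real.sin αi ^2 :=
    Real.sq_sqrt (by positivity)
  have hv2 : v^2 = σ₁^2 * Real.cos αj ^2 + σ₂^2 * Real.sin αj ^2 :=
    Real.sq_sqrt (by positivity)
  have hsci : Real.sin αi ^2 + Real.cos αi ^2 = 1 := Real.sin_sq_add_cos_sq αi
  have hscj : Real.sin αj ^2 + Real.cos αj ^2 = 1 := Real.sin_sq_add_cos_sq αj
  have hs2i : (0:ℝ) ≤ Real.sin αi ^2 := sq_nonneg _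
  have hs2j : (0:ℝ) ≤ Real.sin αj ^2 := sq_nonneg _
  have hss : σ₁^2 ≤ σ₂^2 := by nlinarith
  have hd : (0:ℝ) ≤ σ₂^2 - σ₁^2 := by linarith
  have key := core σ₁ σ₂ u v h0 h12 hu0 hv0
    (by nlinarith [mul_nonneg hs2i hd])
    (by nlinarith [mul_nonneg (show (0:ℝ) ≤ Real.cos αi ^ 2 - 3/4 by linarith) hd])
    (by nlinarith [mul_nonneg (show (0:ℝ) ≤ 1/4 - Real.cos αj ^ 2 by linarith) hd])
    (by nlinarith [mul_nonneg (sq_nonneg (Real.cos αj)) hd])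
  have hs6 : T i + T j ≤ ∑ k ∈ Finset.range 6, T k := hsum
  calc (σ₁ - 1)^2 + (σ₂ - 1)^2 ≤ 14*((u-1)^2 + (v-1)^2) := key
    _ = 14*(T i + T j) := by rw [hTi, hTj]
    _ ≤ 14 * ∑ k ∈ Finset.range 6, T k := by linarith
end

section
/- For every θ ∈ ℝ there exist at least two indices k ∈ {0,1,2,3,4,5} such that sin²(θ + kπ/3) ≥ 3/4. -/
open Real

lemma cos_le_neg_half_aux {x : ℝ} (h1 : 2*π/3 ≤ x) (h2 : x ≤ 4*π/3) :
    Real.cos x ≤ -(1/2) := by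
  have hπ := Real.pi_pos
  have h3 : Real.cos (x - π) = -Real.cos x := Real.cos_sub_pi x
  have habs : |x - π| ≤ π/3 := by
    rw [abs_le]; constructor <;> nlinarith
  have : Real.cos (π/3) ≤ Real.cos |x - π| := by
    apply Real.cos_le_cos_of_nonneg_of_le_pi (abs_nonneg _) (by nlinarith) habs
  rw [Real.cos_abs, h3, Real.cos_pi_div_three] at this
  linarith

lemma exists_k (θ : ℝ) :
    ∃ k : ℕ, k < 3 ∧ (3:ℝ)/4 ≤ Real.sin (θ + (k:ℝ) * π / 3) ^ 2 := by
  have hπ := Real.pi_pos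
  set u := (2*θ - 2*π/3) / (2*π/3) with hu
  set n := ⌊u⌋ with hn
  refine ⟨((-n) % 3).toNat, ?_, ?_⟩
  · have h1 : (-n) % 3 < 3 := Int.emod_lt_of_pos _ (by norm_num)
    have h2 : 0 ≤ (-n) % 3 := Int.emod_nonneg _ (by norm_num)
    omega
  · set k : ℤ := (-n) % 3 with hk
    have hk0 : 0 ≤ k := Int.emod_nonneg _ (by norm_num)
    have hcast : ((((-n) % 3).toNat : ℕ) : ℝ) = (k : ℝ) := by
      rw [hk]; exact_mod_cast congrArg Int.cast (Int.toNat_of_nonneg hk0)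
    rw [hcast]
    have hm : n + k = 3 * (-((-n)/3)) := by
      have := Int.emod_add_mul_ediv (-n) 3
      omega
    set m : ℤ := -((-n)/3) with hmdef
    have h2θ : 2*θ = 2*π/3 + u * (2*π/3) := by
      rw [hu, div_mul_cancel₀ _ (by positivity)]; ring
    have hfr : u = Int.fract u + n := by
      rw [Int.fract]; ring
    have hangle : 2 * (θ + (k:ℝ) * π / 3) = (2*π/3 + Int.fract u * (2*π/3)) + m * (2*π) := by
      have : 2 * (θ + (k:ℝ) * π / 3) = 2*θ + k * (2*π/3) := by ring
      rw [this, h2θ]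
      have h3m : ((n:ℝ) + k) = 3 * m := by exact_mod_cast congrArg Int.cast hm
      linear_combination (2*π/3) * hfr + (2*π/3) * h3m
    have hcos : Real.cos (2 * (θ + (k:ℝ) * π / 3)) ≤ -(1/2) := by
      rw [hangle, Real.cos_add_int_mul_two_pi]
      apply cos_le_neg_half_aux
      · nlinarith [Int.fract_nonneg u]
      · nlinarith [Int.fract_lt_one u]
    have := Real.sin_sq_eq_half_sub (θ + (k:ℝ) * π / 3)
    linarith

theorem stmt1 (θ : ℝ) :
    2 ≤ ((Finset.range 6).filter
      (fun k : ℕ => (3:ℝ)/4 ≤ Real.sin (θ + (k:ℝ) * π / 3) ^ 2)).card := by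
  obtain ⟨k, hk3, hk⟩ := exists_k θ
  have hk' : (3:ℝ)/4 ≤ Real.sin (θ + ((k+3 : ℕ):ℝ) * π / 3) ^ 2 := by
    have heq : θ + ((k+3 : ℕ):ℝ) * π / 3 = (θ + (k:ℝ) * π / 3) + π := by
      push_cast; ring
    rw [heq, Real.sin_add_pi]
    nlinarith [hk]

  push_cast at hk'
  have hsub : ({k, k+3} : Finset ℕ) ⊆ (Finset.range 6).filter
      (fun k : ℕ => (3:ℝ)/4 ≤ Real.sin (θ + (k:ℝ) * π / 3) ^ 2) := by
    intro x hx
    simp only [Finset.mem_insert, Finset.mem_singleton] at hx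
    rcases hx with rfl | rfl <;> simp [Finset.mem_filter, Finset.mem_range] <;>
      first
      | exact ⟨by omega, hk⟩
      | exact ⟨by omega, hk'⟩
  calc 2 = ({k, k+3} : Finset ℕ).card := by
        rw [Finset.card_insert_of_notMem (by simp), Finset.card_singleton]
    _ ≤ _ := Finset.card_le_card hsub
end

section
/- Let p ≥ 2, let Φ(r) = |r|^p/p, let B¹ be the six unit directions {R_{kπ/3} e₁ : k = 0,…,5}, and let Ψ : ℝ → [0,∞) be continuous with Ψ(a) = 0 iff a = 1 and satisfying the growth estimate |Ψ(a) − Ψ(b)| ≤ C(|a|^{p/2−1} + |b|^{p/2−1} + 1)|a−b|. Define W(A) = ∑_{e∈B¹} Φ(|Aᵀe| − 1) + Ψ(det A). Then there exists c₂ > 0 such that W(A) ≥ c₂ dist^p(A, SO(2)) for every 2×2 real matrix A. -/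
open Real Finset

noncomputable def frob (A : Matrix (Fin 2) (Fin 2) ℝ) : ℝ :=
  Real.sqrt (∑ i, ∑ j, (A i j)^2)

noncomputable def Φ (p r : ℝ) : ℝ := |r| ^ p / p

def SO2 : Set (Matrix (Fin 2) (Fin 2) ℝ) :=
  {Q | Q.transpose * Q = 1 ∧ Q.det = 1}

noncomputable def distSO (A : Matrix (Fin 2) (Fin 2) ℝ) : ℝ :=
  sInf ((fun Q => frob (A - Q)) '' SO2)

/-- The full lattice energy density W(A) = ∑_{e∈B¹} Φ(|Aᵀe| − 1) + Ψ(det A). -/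
noncomputable def Wfull (p : ℝ) (Ψ : ℝ → ℝ) (A : Matrix (Fin 2) (Fin 2) ℝ) : ℝ :=
  (∑ k ∈ Finset.range 6,
    Φ p (vnorm (A.transpose.mulVec ((Rot ((k:ℝ) * π / 3)).mulVec e1)) - 1)) + Ψ A.det

/- ### Auxiliary lemmas -/

lemma sqrt3_sq : (Real.sqrt 3)^2 = 3 := Real.sq_sqrt (by norm_num)

lemma sqrt3_ge : (1.7:ℝ) ≤ Real.sqrt 3 := by
  rw [show (1.7:ℝ) = Real.sqrt (1.7^2) by rw [Real.sqrt_sq]; norm_num]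
  exact Real.sqrt_le_sqrt (by norm_num)

lemma core_aux (x y P M : ℝ) (hxy : y ≤ x) (hP : (3*x+y)/4 ≤ P) (hM : M ≤ (x+3*y)/4) :
    (2/9)*(x^2+y^2) ≤ P^2 + M^2 := by
  rcases le_or_gt 0 (3*x + y) with hα | hα
  · rcases le_or_gt (x + 3*y) 0 with hβ | hβ
    · nlinarith [sq_nonneg (x+y), sq_nonneg (P - (3*x+y)/4), sq_nonneg (M - (x+3*y)/4)]
    · have hx0 : 0 < x := by linarith
      have hyx : y^2 ≤ x^2 := by nlinarith
      nlinarith [sq_nonneg M, sq_nonneg (P - (3*x+y)/4)]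
  · have hy0 : y < 0 := by linarith
    have hyx : x^2 ≤ y^2 := by nlinarith
    nlinarith [sq_nonneg P, sq_nonneg (M - (x+3*y)/4)]

lemma sq_shift_aux (s : ℝ) (h0 : 0 ≤ s) (h4 : s ≤ 4) : (s^2-1)^2 ≤ 25*(s-1)^2 := by
  nlinarith [mul_nonneg (sq_nonneg (s-1)) (by nlinarith : (0:ℝ) ≤ 25 - (s+1)^2)]

lemma dd_aux (σ : ℝ) (h : 0 ≤ σ) : (σ-1)^2 ≤ (σ^2-1)^2 := by
  nlinarith [mul_nonneg (sq_nonneg (σ-1)) (by nlinarith : (0:ℝ) ≤ (σ+1)^2 - 1)]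

lemma sqrt3half_aux (σ q : ℝ) (h0 : 0 ≤ σ) (hq : 3*σ^2/4 ≤ q) :
    Real.sqrt 3 * σ/2 ≤ Real.sqrt q := by
  have hs : Real.sqrt (3*σ^2/4) ≤ Real.sqrt q := Real.sqrt_le_sqrt hq
  calc Real.sqrt 3 * σ / 2 = Real.sqrt (3*σ^2/4) := by
        rw [show 3*σ^2/4 = 3 * (σ/2)^2 by ring, Real.sqrt_mul (by norm_num),
          Real.sqrt_sq (by linarith)]; ring
    _ ≤ Real.sqrt q := hs

lemma key_lemma (σ1 σ2 qp qm : ℝ) (h2 : 0 ≤ σ2) (h12 : σ2 ≤ σ1)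
    (hqp : (3*σ1^2 + σ2^2)/4 ≤ qp) (hqp' : qp ≤ σ1^2)
    (hqm : 0 ≤ qm) (hqm' : qm ≤ (σ1^2 + 3*σ2^2)/4) :
    (2/225) * ((σ1-1)^2 + (σ2-1)^2) ≤ (Real.sqrt qp - 1)^2 + (Real.sqrt qm - 1)^2 := by
  have h1 : 0 ≤ σ1 := le_trans h2 h12
  have hqp0 : 0 ≤ qp := le_trans (by positivity) hqp
  have hP : (Real.sqrt qp)^2 = qp := Real.sq_sqrt hqp0
  have hM : (Real.sqrt qm)^2 = qm := Real.sq_sqrt hqm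
  have hP0 : 0 ≤ Real.sqrt qp := Real.sqrt_nonneg _
  have hM0 : 0 ≤ Real.sqrt qm := Real.sqrt_nonneg _
  rcases le_or_gt σ1 4 with hσ4 | hσ4
  · -- compact case
    have hPle : Real.sqrt qp ≤ σ1 := by
      rw [show σ1 = Real.sqrt (σ1^2) by rw [Real.sqrt_sq h1]]
      exact Real.sqrt_le_sqrt hqp'
    have hMle : Real.sqrt qm ≤ 4 := by
      have h16 : qm ≤ 16 := by nlinarith
      calc Real.sqrt qm ≤ Real.sqrt 16 := Real.sqrt_le_sqrt h16
        _ = 4 := by rw [show (16:ℝ) = 4^2 by norm_num, Real.sqrt_sq]; norm_num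
    have hcore : (2/9)*((σ1^2-1)^2+(σ2^2-1)^2) ≤ (qp-1)^2 + (qm-1)^2 := by
      apply core_aux
      · nlinarith
      · linarith
      · linarith
    have c1 : (qp - 1)^2 ≤ 25 * (Real.sqrt qp - 1)^2 := by
      have := sq_shift_aux (Real.sqrt qp) hP0 (by linarith)
      rw [hP] at this; linarith
    have c2 : (qm - 1)^2 ≤ 25 * (Real.sqrt qm - 1)^2 := by
      have := sq_shift_aux (Real.sqrt qm) hM0 hMle
      rw [hM] at this; linarith
    have d1 : (σ1-1)^2 ≤ (σ1^2-1)^2 := dd_aux σ1 h1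
    have d2 : (σ2-1)^2 ≤ (σ2^2-1)^2 := dd_aux σ2 h2
    linarith
  · -- large case
    have h3 : Real.sqrt 3 * σ1 / 2 ≤ Real.sqrt qp := sqrt3half_aux σ1 qp h1 (by nlinarith)
    have h17 := sqrt3_ge
    have hr : σ1/2 ≤ Real.sqrt qp - 1 := by
      nlinarith [mul_nonneg (by linarith : (0:ℝ) ≤ Real.sqrt 3 - 1.7) h1]
    have hs1 : σ1^2/4 ≤ (Real.sqrt qp - 1)^2 := by
      calc σ1^2/4 = (σ1/2)^2 := by ring
        _ ≤ (Real.sqrt qp - 1)^2 := pow_le_pow_left₀ (by linarith) hr 2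
    have hd1 : (σ1-1)^2 ≤ σ1^2 := by nlinarith
    have hd2 : (σ2-1)^2 ≤ σ1^2 := by
      nlinarith [mul_nonneg (by linarith : (0:ℝ) ≤ σ1-σ2+1) (by linarith : (0:ℝ) ≤ σ1+σ2-1)]
    nlinarith [sq_nonneg (Real.sqrt qm - 1)]

lemma hmax_lemma (u v ρ : ℝ) (hρ : 0 ≤ ρ) (hρ2 : ρ^2 = u^2 + v^2) :
    ρ/2 ≤ max u (max (-u/2 + Real.sqrt 3 * v/2) (-u/2 - Real.sqrt 3 * v/2)) := by
  have h3 := sqrt3_sq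
  have h30 : 0 ≤ Real.sqrt 3 := Real.sqrt_nonneg 3
  have hu : u ≤ ρ := by nlinarith [sq_nonneg (ρ - u), sq_nonneg (ρ + u), sq_nonneg v]
  have hu' : -ρ ≤ u := by nlinarith [sq_nonneg (ρ + u), sq_nonneg v]
  rcases le_or_gt (ρ/2) u with h | h
  · exact le_max_of_le_left h
  rcases le_or_gt 0 v with hv | hv
  · refine le_max_of_le_right (le_max_of_le_left ?_)
    have hX : 0 ≤ Real.sqrt 3 * v := by positivity
    have hsq : (ρ + u)^2 ≤ (Real.sqrt 3 * v)^2 := by nlinarith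
    have : ρ + u ≤ Real.sqrt 3 * v := by nlinarith
    linarith
  · refine le_max_of_le_right (le_max_of_le_right ?_)
    have hX : 0 ≤ Real.sqrt 3 * (-v) := by nlinarith
    have hsq : (ρ + u)^2 ≤ (Real.sqrt 3 * (-v))^2 := by nlinarith
    have : ρ + u ≤ Real.sqrt 3 * (-v) := by nlinarith
    linarith

lemma rsq_rpow (r p : ℝ) (hr : 0 ≤ r) : (r^2)^(p/2) = r^p := by
  rw [← Real.rpow_natCast r 2, ← Real.rpow_mul hr,
    show ((2:ℕ):ℝ)*(p/2) = p by push_cast; ring]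

lemma add_rpow_le (p x y : ℝ) (hp : 2 ≤ p) (hx : 0 ≤ x) (hy : 0 ≤ y) :
    (x+y)^(p/2) ≤ 2^(p/2) * (x^(p/2) + y^(p/2)) := by
  have hp0 : 0 ≤ p/2 := by linarith
  set m := max x y with hmdef
  have hm0 : 0 ≤ m := le_trans hx (le_max_left _ _)
  have h1 : x + y ≤ 2*m := by
    have := le_max_left x y; have := le_max_right x y; linarith
  calc (x+y)^(p/2) ≤ (2*m)^(p/2) := Real.rpow_le_rpow (by linarith) h1 hp0
    _ = 2^(p/2) * m^(p/2) := Real.mul_rpow (by norm_num) hm0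
    _ ≤ 2^(p/2) * (x^(p/2) + y^(p/2)) := by
        have hM : m^(p/2) ≤ x^(p/2) + y^(p/2) := by
          rcases max_cases x y with ⟨h,_⟩ | ⟨h,_⟩ <;> rw [hmdef, h]
          · exact le_add_of_nonneg_right (Real.rpow_nonneg hy _)
          · exact le_add_of_nonneg_left (Real.rpow_nonneg hx _)
        exact mul_le_mul_of_nonneg_left hM (by positivity)

/- ### Evaluation of the energy -/

lemma rot_e1 (α : ℝ) : (Rot α).mulVec e1 = ![Real.cos α, Real.sin α] := by
  funext i
  fin_cases i <;> simp [Rot, e1, Matrix.mulVec, dotProduct, Fin.sum_univ_two]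

lemma term_eval (A : Matrix (Fin 2) (Fin 2) ℝ) (x y : ℝ) :
    vnorm (A.transpose.mulVec ![x, y]) =
      Real.sqrt ((A 0 0 * x + A 1 0 * y)^2 + (A 0 1 * x + A 1 1 * y)^2) := by
  unfold vnorm
  rw [Fin.sum_univ_two]
  congr 1 <;> simp [Matrix.mulVec, dotProduct, Fin.sum_univ_two, Matrix.transpose]

noncomputable def Nq (A : Matrix (Fin 2) (Fin 2) ℝ) (x y : ℝ) : ℝ :=
  (A 0 0 * x + A 1 0 * y)^2 + (A 0 1 * x + A 1 1 * y)^2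

lemma Wfull_eval (p : ℝ) (Ψ : ℝ → ℝ) (A : Matrix (Fin 2) (Fin 2) ℝ) :
    Wfull p Ψ A =
      2 * Φ p (Real.sqrt (Nq A 1 0) - 1)
      + 2 * Φ p (Real.sqrt (Nq A (1/2) (Real.sqrt 3/2)) - 1)
      + 2 * Φ p (Real.sqrt (Nq A (-(1/2)) (Real.sqrt 3/2)) - 1) + Ψ A.det := by
  unfold Wfull
  rw [Finset.sum_range_succ, Finset.sum_range_succ, Finset.sum_range_succ,
    Finset.sum_range_succ, Finset.sum_range_succ, Finset.sum_range_one]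
  have h0 : ((0:ℕ):ℝ) * π / 3 = 0 := by norm_num
  have h1 : ((1:ℕ):ℝ) * π / 3 = π/3 := by push_cast; ring
  have h2 : ((2:ℕ):ℝ) * π / 3 = π - π/3 := by push_cast; ring
  have h3 : ((3:ℕ):ℝ) * π / 3 = 0 + π := by push_cast; ring
  have h4 : ((4:ℕ):ℝ) * π / 3 = π/3 + π := by push_cast; ring
  have h5 : ((5:ℕ):ℝ) * π / 3 = (π - π/3) + π := by push_cast; ring
  rw [h0, h1, h2, h3, h4, h5]
  rw [rot_e1, rot_e1, rot_e1, rot_e1, rot_e1, rot_e1]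
  simp only [Real.cos_add_pi, Real.sin_add_pi, Real.cos_pi_sub, Real.sin_pi_sub,
    Real.cos_pi_div_three, Real.sin_pi_div_three, Real.cos_zero, Real.sin_zero]
  rw [show (![(-(1:ℝ)), -0] : Fin 2 → ℝ) = ![(-1:ℝ), 0] by norm_num,
      show (![(-(1/2:ℝ)), -(Real.sqrt 3/2)] : Fin 2 → ℝ) = ![(-(1/2):ℝ), -(Real.sqrt 3/2)] by norm_num,
      show (![(-(-(1/2):ℝ)), -(Real.sqrt 3/2)] : Fin 2 → ℝ) = ![(1/2:ℝ), -(Real.sqrt 3/2)] by norm_num]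
  rw [term_eval, term_eval, term_eval, term_eval A (-1) 0, term_eval A (-(1/2)) (-(Real.sqrt 3/2)),
      term_eval A (1/2) (-(Real.sqrt 3/2))]
  unfold Nq
  ring_nf

/- ### Distance estimate -/

lemma mem_SO2_rot (x y : ℝ) (h : x^2 + y^2 = 1) : !![x, -y; y, x] ∈ SO2 := by
  constructor
  · ext i j
    fin_cases i <;> fin_cases j <;>
      simp [Matrix.mul_apply, Fin.sum_univ_two, Matrix.transpose, Matrix.one_apply] <;>
      nlinarith
  · rw [Matrix.det_fin_two]; simp; nlinarith

lemma frob_sub_rot (A : Matrix (Fin 2) (Fin 2) ℝ) (x y : ℝ) :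
    frob (A - !![x,-y;y,x]) =
      Real.sqrt ((A 0 0)^2+(A 0 1)^2+(A 1 0)^2+(A 1 1)^2 + 2*(x^2+y^2)
        - 2*(x*(A 0 0 + A 1 1) + y*(A 1 0 - A 0 1))) := by
  unfold frob
  rw [Fin.sum_univ_two, Fin.sum_univ_two, Fin.sum_univ_two]
  congr 1
  simp [Matrix.sub_apply]
  ring

lemma bdd_frob (A : Matrix (Fin 2) (Fin 2) ℝ) :
    BddBelow ((fun Q => frob (A - Q)) '' SO2) := by
  refine ⟨0, ?_⟩
  rintro x ⟨Q, hQ, rfl⟩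
  exact Real.sqrt_nonneg _

lemma distSO_nonneg (A : Matrix (Fin 2) (Fin 2) ℝ) : 0 ≤ distSO A := by
  apply le_csInf
  · exact ⟨_, ⟨!![1,-0;0,1], mem_SO2_rot 1 0 (by norm_num), rfl⟩⟩
  · rintro x ⟨Q, hQ, rfl⟩
    exact Real.sqrt_nonneg _

lemma distSO_le_D (A : Matrix (Fin 2) (Fin 2) ℝ) :
    distSO A ≤ Real.sqrt (((A 0 0)^2+(A 0 1)^2+(A 1 0)^2+(A 1 1)^2) + 2
      - 2 * Real.sqrt ((A 0 0 + A 1 1)^2 + (A 1 0 - A 0 1)^2)) := by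
  set a := A 0 0; set b := A 0 1; set c := A 1 0; set d := A 1 1
  set t := Real.sqrt ((a + d)^2 + (c - b)^2) with htdef
  have ht0 : 0 ≤ t := Real.sqrt_nonneg _
  have ht2 : t^2 = (a + d)^2 + (c - b)^2 := Real.sq_sqrt (by positivity)
  rcases eq_or_lt_of_le ht0 with h0 | hpos
  · have harg : (a + d)^2 + (c - b)^2 = 0 := by rw [← ht2, ← h0]; ring
    have had : a + d = 0 := by nlinarith [sq_nonneg (a+d), sq_nonneg (c-b)]
    have hle := csInf_le (bdd_frob A) ⟨_, mem_SO2_rot 1 0 (by norm_num), rfl⟩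
    calc distSO A ≤ frob (A - !![1,-0;0,1]) := hle
      _ = Real.sqrt (a^2+b^2+c^2+d^2 + 2*((1:ℝ)^2+0^2) - 2*(1*(a+d) + 0*(c-b))) :=
          frob_sub_rot A 1 0
      _ = Real.sqrt (a^2+b^2+c^2+d^2 + 2 - 2*t) := by rw [had, ← h0]; norm_num
  · set x := (a+d)/t with hx
    set y := (c-b)/t with hy
    have htne : t ≠ 0 := ne_of_gt hpos
    have hxy : x^2 + y^2 = 1 := by
      rw [hx, hy]; field_simp; linarith [ht2]
    have hsum : x*(a+d) + y*(c-b) = t := by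
      rw [hx, hy]; field_simp; nlinarith [ht2]
    have hle := csInf_le (bdd_frob A) ⟨_, mem_SO2_rot x y hxy, rfl⟩
    calc distSO A ≤ frob (A - !![x,-y;y,x]) := hle
      _ = Real.sqrt (a^2+b^2+c^2+d^2 + 2*(x^2+y^2) - 2*(x*(a+d) + y*(c-b))) := frob_sub_rot A x y
      _ = Real.sqrt (a^2+b^2+c^2+d^2 + 2 - 2*t) := by rw [hxy, hsum]; norm_num


lemma le_of_sq_sub_aux (x y z : ℝ) (hx : 0 ≤ x) (hy : 0 ≤ y) (h : y^2 - x^2 = z^2) :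
    x ≤ y := by nlinarith [sq_nonneg z]

lemma lin_le_rho1 (u v ρ : ℝ) (hρ0 : 0 ≤ ρ) (hρ2 : ρ^2 = u^2 + v^2) : u ≤ ρ := by
  nlinarith [sq_nonneg v]

lemma lin_le_rho2 (u v ρ : ℝ) (hρ0 : 0 ≤ ρ) (hρ2 : ρ^2 = u^2 + v^2) :
    -u/2 + Real.sqrt 3 * v/2 ≤ ρ := by
  nlinarith [sq_nonneg (Real.sqrt 3 * u + v), sqrt3_sq, Real.sqrt_nonneg 3,
    sq_nonneg (-u/2 + Real.sqrt 3 * v/2 + ρ)]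

lemma lin_le_rho3 (u v ρ : ℝ) (hρ0 : 0 ≤ ρ) (hρ2 : ρ^2 = u^2 + v^2) :
    -u/2 - Real.sqrt 3 * v/2 ≤ ρ := by
  have := lin_le_rho2 u (-v) ρ hρ0 (by rw [hρ2]; ring)
  linarith

set_option maxHeartbeats 2000000 in
theorem stmt12 (p : ℝ) (hp : 2 ≤ p) (Ψ : ℝ → ℝ) (hcont : Continuous Ψ)
    (hΨpos : ∀ a, 0 ≤ Ψ a) (hΨzero : ∀ a, Ψ a = 0 ↔ a = 1)
    (C : ℝ) (hC : 0 < C)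
    (hgrowth : ∀ a b : ℝ, |Ψ a - Ψ b| ≤ C * (|a| ^ (p/2 - 1) + |b| ^ (p/2 - 1) + 1) * |a - b|) :
    ∃ c₂ > 0, ∀ A : Matrix (Fin 2) (Fin 2) ℝ,
      c₂ * distSO A ^ p ≤ Wfull p Ψ A := by
  have hp0 : 0 < p := by linarith
  have hp2 : (0:ℝ) ≤ p/2 := by linarith
  -- minimum of Ψ on [-8,0]
  obtain ⟨x₀, hx₀mem, hx₀min⟩ :=
    (isCompact_Icc (a := (-8:ℝ)) (b := 0)).exists_isMinOn
      ⟨-1, by norm_num, by norm_num⟩ hcont.continuousOn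
  set μ := Ψ x₀ with hμdef
  have hμpos : 0 < μ := by
    rcases lt_or_eq_of_le (hΨpos x₀) with h | h
    · exact h
    · exfalso
      have h1 := (hΨzero x₀).1 h.symm
      have h2 := hx₀mem.2
      linarith
  have hμmin : ∀ z ∈ Set.Icc (-8:ℝ) 0, μ ≤ Ψ z := fun z hz => hx₀min hz
  set κ := (1/225:ℝ)^(p/2) / p with hκdef
  have hκpos : 0 < κ := div_pos (Real.rpow_pos_of_pos (by norm_num) _) hp0
  set κ' := (2:ℝ)^(-(p/2)) * min (1/p) μ with hκ'def
  have hκ'pos : 0 < κ' :=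
    mul_pos (Real.rpow_pos_of_pos two_pos _) (lt_min (by positivity) hμpos)
  set c₂ := min κ κ' / 2^(2*p) with hc₂def
  have h2ppos : (0:ℝ) < 2^(2*p) := Real.rpow_pos_of_pos two_pos _
  have hc₂pos : 0 < c₂ := div_pos (lt_min hκpos hκ'pos) h2ppos
  refine ⟨c₂, hc₂pos, fun A => ?_⟩
  obtain ⟨a, b, c, d, hA⟩ : ∃ a b c d, A = !![a, b; c, d] :=
    ⟨A 0 0, A 0 1, A 1 0, A 1 1, by
      ext i j; fin_cases i <;> fin_cases j <;> simp⟩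
  subst hA
  have ea : (!![a,b;c,d] : Matrix (Fin 2) (Fin 2) ℝ) 0 0 = a := rfl
  have eb : (!![a,b;c,d] : Matrix (Fin 2) (Fin 2) ℝ) 0 1 = b := rfl
  have ec : (!![a,b;c,d] : Matrix (Fin 2) (Fin 2) ℝ) 1 0 = c := rfl
  have ed : (!![a,b;c,d] : Matrix (Fin 2) (Fin 2) ℝ) 1 1 = d := rfl
  set T := a^2+b^2+c^2+d^2 with hT
  set u := (a^2+b^2-c^2-d^2)/2 with hu
  set v := a*c + b*d with hv
  set dt := a*d - b*c with hdt
  have hAdet : (!![a,b;c,d] : Matrix (Fin 2) (Fin 2) ℝ).det = dt := by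
    rw [Matrix.det_fin_two_of]
  set ρ := Real.sqrt (u^2+v^2) with hρdef
  have hρ0 : 0 ≤ ρ := Real.sqrt_nonneg _
  have hρ2 : ρ^2 = u^2 + v^2 := Real.sq_sqrt (by positivity)
  have hdet2 : (T/2)^2 - ρ^2 = dt^2 := by rw [hρ2, hu, hv, hT, hdt]; ring
  have hT0 : 0 ≤ T := by rw [hT]; positivity
  have hρT : ρ ≤ T/2 := le_of_sq_sub_aux ρ (T/2) dt hρ0 (by linarith) hdet2
  set σ1 := Real.sqrt (T/2 + ρ) with hσ1def
  set σ2 := Real.sqrt (T/2 - ρ) with hσ2def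
  have hσ1sq : σ1^2 = T/2 + ρ := Real.sq_sqrt (by linarith)
  have hσ2sq : σ2^2 = T/2 - ρ := Real.sq_sqrt (by linarith)
  have hσ1_0 : 0 ≤ σ1 := Real.sqrt_nonneg _
  have hσ2_0 : 0 ≤ σ2 := Real.sqrt_nonneg _
  have h12 : σ2 ≤ σ1 := Real.sqrt_le_sqrt (by linarith)
  have hprod : σ1 * σ2 = |dt| := by
    rw [hσ1def, hσ2def, ← Real.sqrt_mul (by linarith),
      show (T/2+ρ)*(T/2-ρ) = dt^2 by linear_combination hdet2]
    exact Real.sqrt_sq_eq_abs dt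
  -- the three lattice-direction values
  set N0 := T/2 + u with hN0def
  set N1 := T/2 - u/2 + Real.sqrt 3 * v/2 with hN1def
  set N2 := T/2 - u/2 - Real.sqrt 3 * v/2 with hN2def
  have hNq0 : Nq !![a,b;c,d] 1 0 = N0 := by
    unfold Nq; rw [ea, eb, ec, ed, hN0def, hu, hT]; ring
  have hNq1 : Nq !![a,b;c,d] (1/2) (Real.sqrt 3/2) = N1 := by
    unfold Nq; rw [ea, eb, ec, ed, hN1def, hu, hv, hT]
    linear_combination (c^2/4 + d^2/4) * sqrt3_sq
  have hNq2 : Nq !![a,b;c,d] (-(1/2)) (Real.sqrt 3/2) = N2 := by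
    unfold Nq; rw [ea, eb, ec, ed, hN2def, hu, hv, hT]
    linear_combination (c^2/4 + d^2/4) * sqrt3_sq
  set qp := max N0 (max N1 N2) with hqpdef
  set qm := min N0 (min N1 N2) with hqmdef
  have h3 := sqrt3_sq
  have h30 : (0:ℝ) ≤ Real.sqrt 3 := Real.sqrt_nonneg 3
  have hle1 : u ≤ ρ := lin_le_rho1 u v ρ hρ0 hρ2
  have hle2 : -u/2 + Real.sqrt 3 * v/2 ≤ ρ := lin_le_rho2 u v ρ hρ0 hρ2
  have hle3 : -u/2 - Real.sqrt 3 * v/2 ≤ ρ := lin_le_rho3 u v ρ hρ0 hρ2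
  have hqp_ub : qp ≤ T/2 + ρ := by
    rw [hqpdef]
    apply max_le (by rw [hN0def]; linarith)
    exact max_le (by rw [hN1def]; linarith) (by rw [hN2def]; linarith)
  have hqp_lb : T/2 + ρ/2 ≤ qp := by
    have hmx := hmax_lemma u v ρ hρ0 hρ2
    rw [hqpdef]
    rcases le_max_iff.1 hmx with h | h
    · exact le_max_of_le_left (by rw [hN0def]; linarith)
    rcases le_max_iff.1 h with h' | h'
    · exact le_max_of_le_right (le_max_of_le_left (by rw [hN1def]; linarith))
    · exact le_max_of_le_right (le_max_of_le_right (by rw [hN2def]; linarith))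
  have hqm_ub : qm ≤ T/2 - ρ/2 := by
    have hmx := hmax_lemma (-u) (-v) ρ hρ0 (by rw [hρ2]; ring)
    rw [hqmdef]
    rcases le_max_iff.1 hmx with h | h
    · exact le_trans (min_le_left _ _) (by rw [hN0def]; linarith)
    rcases le_max_iff.1 h with h' | h'
    · exact le_trans (le_trans (min_le_right _ _) (min_le_left _ _)) (by rw [hN1def]; linarith)
    · exact le_trans (le_trans (min_le_right _ _) (min_le_right _ _)) (by rw [hN2def]; linarith)
  have hqm_lb : 0 ≤ qm := by
    rw [hqmdef]
    refine le_min ?_ (le_min ?_ ?_)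
    · rw [← hNq0]; unfold Nq; positivity
    · rw [← hNq1]; unfold Nq; positivity
    · rw [← hNq2]; unfold Nq; positivity
  have hkey := key_lemma σ1 σ2 qp qm hσ2_0 h12
    (by rw [show (3*σ1^2 + σ2^2)/4 = T/2 + ρ/2 by rw [hσ1sq, hσ2sq]; ring]; exact hqp_lb)
    (by rw [hσ1sq]; exact hqp_ub)
    hqm_lb
    (by rw [show (σ1^2 + 3*σ2^2)/4 = T/2 - ρ/2 by rw [hσ1sq, hσ2sq]; ring]; exact hqm_ub)
  -- energy lower bound by the two selected terms
  have hΦnonneg : ∀ r, 0 ≤ Φ p r :=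
    fun r => div_nonneg (Real.rpow_nonneg (abs_nonneg r) p) (le_of_lt hp0)
  set W := Wfull p Ψ !![a,b;c,d] with hWdef
  have hW : Φ p (Real.sqrt qp - 1) + Φ p (Real.sqrt qm - 1) + Ψ dt ≤ W := by
    rw [hWdef, Wfull_eval, hNq0, hNq1, hNq2, hAdet]
    have hqpmem : qp = N0 ∨ qp = N1 ∨ qp = N2 := by
      rw [hqpdef]
      rcases max_choice N0 (max N1 N2) with h | h
      · exact Or.inl h
      · rcases max_choice N1 N2 with h' | h' <;> rw [h, h']
        · exact Or.inr (Or.inl rfl)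
        · exact Or.inr (Or.inr rfl)
    have hqmmem : qm = N0 ∨ qm = N1 ∨ qm = N2 := by
      rw [hqmdef]
      rcases min_choice N0 (min N1 N2) with h | h
      · exact Or.inl h
      · rcases min_choice N1 N2 with h' | h' <;> rw [h, h']
        · exact Or.inr (Or.inl rfl)
        · exact Or.inr (Or.inr rfl)
    rcases hqpmem with h | h | h <;> rcases hqmmem with h' | h' | h' <;> rw [h, h'] <;>
      linarith [hΦnonneg (Real.sqrt N0 - 1), hΦnonneg (Real.sqrt N1 - 1),
        hΦnonneg (Real.sqrt N2 - 1)]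
  -- from key lemma to p-th powers
  set r1 := |Real.sqrt qp - 1| with hr1def
  set r2 := |Real.sqrt qm - 1| with hr2def
  set Δsq := (σ1-1)^2 + (σ2-1)^2 with hΔsqdef
  have hΔ0 : 0 ≤ Δsq := by rw [hΔsqdef]; positivity
  set Dp := Δsq^(p/2) with hDpdef
  have hDp0 : 0 ≤ Dp := Real.rpow_nonneg hΔ0 _
  have hrsq : (2/225) * Δsq ≤ r1^2 + r2^2 := by
    rw [hr1def, hr2def, sq_abs, sq_abs]; exact hkey
  have hstep1 : ((2/225) * Δsq)^(p/2) ≤ (r1^2 + r2^2)^(p/2) :=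
    Real.rpow_le_rpow (by positivity) hrsq hp2
  have hstep2 : (r1^2 + r2^2)^(p/2) ≤ 2^(p/2) * (r1^p + r2^p) := by
    have := add_rpow_le p (r1^2) (r2^2) hp (by positivity) (by positivity)
    rwa [rsq_rpow r1 p (abs_nonneg _), rsq_rpow r2 p (abs_nonneg _)] at this
  have hstep3 : ((2/225) * Δsq)^(p/2) = 2^(p/2) * ((1/225)^(p/2) * Dp) := by
    rw [show (2/225:ℝ)*Δsq = 2*((1/225)*Δsq) by ring,
      Real.mul_rpow (by norm_num) (by positivity),
      Real.mul_rpow (by norm_num) hΔ0, hDpdef]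
  have hEnergy : κ * Dp ≤ Φ p (Real.sqrt qp - 1) + Φ p (Real.sqrt qm - 1) := by
    have h2p : (0:ℝ) < 2^(p/2) := Real.rpow_pos_of_pos two_pos _
    have hdiv : (1/225:ℝ)^(p/2) * Dp ≤ r1^p + r2^p := by
      have := hstep3 ▸ le_trans hstep1 hstep2
      exact le_of_mul_le_mul_left this h2p
    have hΦ1 : Φ p (Real.sqrt qp - 1) = r1^p / p := by rw [hr1def]; rfl
    have hΦ2 : Φ p (Real.sqrt qm - 1) = r2^p / p := by rw [hr2def]; rfl
    rw [hΦ1, hΦ2, hκdef]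
    rw [div_mul_eq_mul_div, ← add_div]
    exact (div_le_div_iff_of_pos_right hp0).mpr hdiv
  -- distance bound
  have hdistD := distSO_le_D !![a,b;c,d]
  rw [ea, eb, ec, ed] at hdistD
  set t := Real.sqrt ((a + d)^2 + (c - b)^2) with htdef
  have ht0 : 0 ≤ t := Real.sqrt_nonneg _
  have ht2 : t^2 = T + 2*dt := by
    rw [htdef, Real.sq_sqrt (by positivity), hT, hdt]; ring
  have hdist : distSO !![a,b;c,d] ≤ Real.sqrt (T + 2 - 2*t) := hdistD
  have hdist0 := distSO_nonneg !![a,b;c,d]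
  have hWκ : κ * Dp ≤ W := by linarith [hΨpos dt]
  rcases le_or_gt 0 dt with hdet | hdet
  · -- determinant ≥ 0
    have habs : |dt| = dt := abs_of_nonneg hdet
    have hteq : t = σ1 + σ2 := by
      have hfac : (t - (σ1+σ2)) * (t + (σ1+σ2)) = 0 := by
        have hs2 : (σ1+σ2)^2 = T + 2*dt := by
          linear_combination hσ1sq + hσ2sq + 2*hprod + 2*habs
        linear_combination ht2 - hs2
      rcases mul_eq_zero.1 hfac with h | h
      · linarith
      · linarith
    have hDeq : T + 2 - 2*t = Δsq := by
      rw [hteq, hΔsqdef]; linear_combination - hσ1sq - hσ2sq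
    have hd2 : distSO !![a,b;c,d] ^ p ≤ Dp := by
      calc distSO !![a,b;c,d] ^ p ≤ (Real.sqrt Δsq)^p :=
            Real.rpow_le_rpow hdist0 (by rw [← hDeq]; exact hdist) (le_of_lt hp0)
        _ = Dp := by
            rw [Real.sqrt_eq_rpow, ← Real.rpow_mul hΔ0, hDpdef,
              show (1/2)*p = p/2 by ring]
    have hc₂κ : c₂ ≤ κ := by
      rw [hc₂def]
      have h1le : (1:ℝ) ≤ 2^(2*p) := Real.one_le_rpow one_le_two (by linarith)
      calc min κ κ' / 2^(2*p) ≤ min κ κ' / 1 := by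
            apply div_le_div_of_nonneg_left (le_of_lt (lt_min hκpos hκ'pos)) one_pos h1le
        _ = min κ κ' := div_one _
        _ ≤ κ := min_le_left _ _
    calc c₂ * distSO !![a,b;c,d] ^ p ≤ c₂ * Dp :=
          mul_le_mul_of_nonneg_left hd2 (le_of_lt hc₂pos)
      _ ≤ κ * Dp := mul_le_mul_of_nonneg_right hc₂κ hDp0
      _ ≤ W := hWκ
  · -- determinant < 0
    have habs : |dt| = -dt := abs_of_neg hdet
    have hteq : t = σ1 - σ2 := by
      have hfac : (t - (σ1-σ2)) * (t + (σ1-σ2)) = 0 := by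
        have hs2 : (σ1-σ2)^2 = T + 2*dt := by
          linear_combination hσ1sq + hσ2sq - 2*hprod - 2*habs
        linear_combination ht2 - hs2
      rcases mul_eq_zero.1 hfac with h | h
      · linarith
      · linarith
    have hDeq : T + 2 - 2*t = Δsq + 4*σ2 := by
      rw [hteq, hΔsqdef]; linear_combination - hσ1sq - hσ2sq
    have hΔσ0 : (0:ℝ) ≤ Δsq + 4*σ2 := by positivity
    have hd2 : distSO !![a,b;c,d] ^ p ≤ (Δsq + 4*σ2)^(p/2) := by
      calc distSO !![a,b;c,d] ^ p ≤ (Real.sqrt (Δsq + 4*σ2))^p :=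
            Real.rpow_le_rpow hdist0 (by rw [← hDeq]; exact hdist) (le_of_lt hp0)
        _ = (Δsq + 4*σ2)^(p/2) := by
            rw [Real.sqrt_eq_rpow, ← Real.rpow_mul hΔσ0, show (1/2)*p = p/2 by ring]
    have hsplit : (Δsq + 4*σ2)^(p/2) ≤ 2^(p/2) * (Dp + (4*σ2)^(p/2)) := by
      rw [hDpdef]
      exact add_rpow_le p Δsq (4*σ2) hp hΔ0 (by positivity)
    have h4σ : (4*σ2)^(p/2) = 2^p * σ2^(p/2) := by
      rw [Real.mul_rpow (by norm_num) hσ2_0]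
      congr 1
      rw [show (4:ℝ) = 2^(2:ℕ) by norm_num, ← Real.rpow_natCast 2 2,
        ← Real.rpow_mul (by norm_num : (0:ℝ) ≤ 2),
        show ((2:ℕ):ℝ)*(p/2) = p by push_cast; ring]
    have hσ2p0 : (0:ℝ) ≤ σ2^(p/2) := Real.rpow_nonneg hσ2_0 _
    -- second lower bound for W
    have hWσ : κ' * σ2^(p/2) ≤ W := by
      have hWΦ : Φ p (Real.sqrt qp - 1) ≤ W := by
        linarith [hΦnonneg (Real.sqrt qm - 1), hΨpos dt]
      have hWΨ : Ψ dt ≤ W := by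
        linarith [hΦnonneg (Real.sqrt qm - 1), hΦnonneg (Real.sqrt qp - 1)]
      have hΦ1 : Φ p (Real.sqrt qp - 1) = r1^p / p := by rw [hr1def]; rfl
      have hone : ∀ hσ2le : σ2 ≤ 2, (2:ℝ)^(-(p/2)) * σ2^(p/2) ≤ 1 := by
        intro hσ2le
        have h1 : σ2^(p/2) ≤ 2^(p/2) := Real.rpow_le_rpow hσ2_0 hσ2le hp2
        have h2 : (2:ℝ)^(-(p/2)) = (2^(p/2))⁻¹ := Real.rpow_neg (by norm_num) _
        rw [h2]
        have h3 : (0:ℝ) < 2^(p/2) := Real.rpow_pos_of_pos two_pos _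
        calc (2^(p/2))⁻¹ * σ2^(p/2) ≤ (2^(p/2))⁻¹ * 2^(p/2) :=
              mul_le_mul_of_nonneg_left h1 (by positivity)
          _ = 1 := inv_mul_cancel₀ (ne_of_gt h3)
      have hmin1 : min (1/p) μ ≤ 1/p := min_le_left _ _
      have hmin2 : min (1/p) μ ≤ μ := min_le_right _ _
      have hmin0 : 0 ≤ min (1/p) μ := le_of_lt (lt_min (by positivity) hμpos)
      have h2negp : (0:ℝ) < 2^(-(p/2)) := Real.rpow_pos_of_pos two_pos _
      rcases le_or_gt 2 σ2 with hB1 | hσ2le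
      · -- B1 : σ2 ≥ 2
        have hσ2pos : (0:ℝ) < σ2 := by linarith
        have hq : σ2^2 ≤ qp := by rw [hσ2sq]; linarith
        have hsle : σ2 ≤ Real.sqrt qp := by
          rw [show σ2 = Real.sqrt (σ2^2) by rw [Real.sqrt_sq hσ2_0]]
          exact Real.sqrt_le_sqrt hq
        have hr1ge : σ2/2 ≤ r1 := by
          rw [hr1def]
          calc σ2/2 ≤ Real.sqrt qp - 1 := by linarith
            _ ≤ |Real.sqrt qp - 1| := le_abs_self _
        have hr1p : (σ2/2)^p ≤ r1^p :=
          Real.rpow_le_rpow (by linarith) hr1ge (le_of_lt hp0)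
        have hhalf : (σ2/2)^p = σ2^p / 2^p := Real.div_rpow hσ2_0 (by norm_num : (0:ℝ) ≤ 2) p
        have hσp : σ2^p = σ2^(p/2) * σ2^(p/2) := by
          rw [← Real.rpow_add hσ2pos]; congr 1; ring
        have hσhalf : (2:ℝ)^(p/2) ≤ σ2^(p/2) :=
          Real.rpow_le_rpow (by norm_num) hB1 hp2
        have h2sub : (2:ℝ)^(p/2) / 2^p = 2^(-(p/2)) := by
          rw [← Real.rpow_sub two_pos]; congr 1; ring
        have hfin : 2^(-(p/2)) * σ2^(p/2) ≤ r1^p := by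
          calc 2^(-(p/2)) * σ2^(p/2) = (2^(p/2)/2^p) * σ2^(p/2) := by rw [h2sub]
            _ ≤ (σ2^(p/2)/2^p) * σ2^(p/2) := by
                apply mul_le_mul_of_nonneg_right _ hσ2p0
                gcongr
            _ = σ2^p / 2^p := by rw [hσp]; ring
            _ = (σ2/2)^p := hhalf.symm
            _ ≤ r1^p := hr1p
        calc κ' * σ2^(p/2) = min (1/p) μ * (2^(-(p/2)) * σ2^(p/2)) := by
              rw [hκ'def]; ring
          _ ≤ (1/p) * (2^(-(p/2)) * σ2^(p/2)) := by
              apply mul_le_mul_of_nonneg_right hmin1 (by positivity)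
          _ ≤ (1/p) * r1^p := by
              apply mul_le_mul_of_nonneg_left hfin (by positivity)
          _ = r1^p / p := by ring
          _ ≤ W := by rw [← hΦ1]; exact hWΦ
      rcases le_or_gt σ1 4 with hB2 | hB3
      · -- B2 : σ2 < 2, σ1 ≤ 4 : use Ψ
        have hdtlb : -8 ≤ dt := by
          have h8 : σ1 * σ2 ≤ 4*2 := mul_le_mul hB2 (le_of_lt hσ2le) hσ2_0 (by norm_num)
          rw [habs] at hprod
          linarith
        have hμdt : μ ≤ Ψ dt := hμmin dt ⟨hdtlb, le_of_lt hdet⟩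
        calc κ' * σ2^(p/2) = min (1/p) μ * (2^(-(p/2)) * σ2^(p/2)) := by
              rw [hκ'def]; ring
          _ ≤ μ * 1 := by
              apply mul_le_mul hmin2 (hone (le_of_lt hσ2le)) (by positivity) (le_of_lt hμpos)
          _ = μ := mul_one μ
          _ ≤ Ψ dt := hμdt
          _ ≤ W := hWΨ
      · -- B3 : σ2 < 2, σ1 > 4
        have hq : 3*σ1^2/4 ≤ qp := by rw [hσ1sq]; linarith
        have hs3 : Real.sqrt 3 * σ1 / 2 ≤ Real.sqrt qp := sqrt3half_aux σ1 qp hσ1_0 hq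
        have h17 := sqrt3_ge
        have hr1ge : (2:ℝ) ≤ r1 := by
          rw [hr1def]
          have : (2:ℝ) ≤ Real.sqrt qp - 1 := by
            linarith [mul_nonneg (by linarith [sqrt3_ge] : (0:ℝ) ≤ Real.sqrt 3 - 1.7) hσ1_0]
          calc (2:ℝ) ≤ Real.sqrt qp - 1 := this
            _ ≤ |Real.sqrt qp - 1| := le_abs_self _
        have hr1p : (2:ℝ)^p ≤ r1^p :=
          Real.rpow_le_rpow (by norm_num) hr1ge (le_of_lt hp0)
        have h2p1 : (1:ℝ) ≤ 2^p := Real.one_le_rpow one_le_two (le_of_lt hp0)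
        calc κ' * σ2^(p/2) = min (1/p) μ * (2^(-(p/2)) * σ2^(p/2)) := by
              rw [hκ'def]; ring
          _ ≤ (1/p) * 1 := by
              apply mul_le_mul hmin1 (hone (le_of_lt hσ2le)) (by positivity) (by positivity)
          _ ≤ (1/p) * 2^p := by
              apply mul_le_mul_of_nonneg_left h2p1 (by positivity)
          _ ≤ (1/p) * r1^p := by
              apply mul_le_mul_of_nonneg_left hr1p (by positivity)
          _ = r1^p / p := by ring
          _ ≤ W := by rw [← hΦ1]; exact hWΦ
    -- combine
    have hm0 : 0 ≤ min κ κ' := le_of_lt (lt_min hκpos hκ'pos)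
    have hhalfpow : (2:ℝ)^(-1:ℝ) = 1/2 := by
      rw [Real.rpow_neg_one]; norm_num
    have hcoef1 : c₂ * 2^(p/2) ≤ κ / 2 := by
      have hre : c₂ * 2^(p/2) = min κ κ' * 2^(p/2 - 2*p) := by
        rw [hc₂def, Real.rpow_sub two_pos]; ring
      have hle : (2:ℝ)^(p/2 - 2*p) ≤ 1/2 := by
        rw [← hhalfpow]
        exact Real.rpow_le_rpow_of_exponent_le one_le_two (by linarith)
      calc c₂ * 2^(p/2) = min κ κ' * 2^(p/2 - 2*p) := hre
        _ ≤ min κ κ' * (1/2) := mul_le_mul_of_nonneg_left hle hm0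
        _ ≤ κ * (1/2) := mul_le_mul_of_nonneg_right (min_le_left _ _) (by norm_num)
        _ = κ / 2 := by ring
    have hcoef2 : c₂ * (2^(p/2) * 2^p) ≤ κ' / 2 := by
      have hre : c₂ * (2^(p/2) * 2^p) = min κ κ' * 2^(p/2 + p - 2*p) := by
        rw [hc₂def, ← Real.rpow_add two_pos, Real.rpow_sub two_pos]; ring
      have hle : (2:ℝ)^(p/2 + p - 2*p) ≤ 1/2 := by
        rw [← hhalfpow]
        exact Real.rpow_le_rpow_of_exponent_le one_le_two (by linarith)
      calc c₂ * (2^(p/2) * 2^p) = min κ κ' * 2^(p/2 + p - 2*p) := hre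
        _ ≤ min κ κ' * (1/2) := mul_le_mul_of_nonneg_left hle hm0
        _ ≤ κ' * (1/2) := mul_le_mul_of_nonneg_right (min_le_right _ _) (by norm_num)
        _ = κ' / 2 := by ring
    have hWpos : 0 ≤ W := by
      have := hΦnonneg (Real.sqrt qp - 1); have := hΦnonneg (Real.sqrt qm - 1)
      have := hΨpos dt; linarith
    calc c₂ * distSO !![a,b;c,d] ^ p ≤ c₂ * (Δsq + 4*σ2)^(p/2) :=
          mul_le_mul_of_nonneg_left hd2 (le_of_lt hc₂pos)
      _ ≤ c₂ * (2^(p/2) * (Dp + (4*σ2)^(p/2))) := by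
          apply mul_le_mul_of_nonneg_left hsplit (le_of_lt hc₂pos)
      _ = (c₂ * 2^(p/2)) * Dp + (c₂ * (2^(p/2) * 2^p)) * σ2^(p/2) := by
          rw [h4σ]; ring
      _ ≤ (κ/2) * Dp + (κ'/2) * σ2^(p/2) := by
          apply add_le_add
          · exact mul_le_mul_of_nonneg_right hcoef1 hDp0
          · exact mul_le_mul_of_nonneg_right hcoef2 hσ2p0
      _ = ((κ * Dp) + (κ' * σ2^(p/2))) / 2 := by ring
      _ ≤ W := by linarith [add_le_add hWκ hWσ]
end

section
/- Let 0 < s < 1, 1 ≤ p < ∞, and let f ∈ W^{s,p}(0, π). Then the even extension f̃ of f to (−π, π), defined by f̃(θ) = f(|θ|), belongs to W^{s,p}(−π, π) and satisfies ‖f̃‖_{W^{s,p}(−π,π)} ≤ C ‖f‖_{W^{s,p}(0,π)} for a universal constant C > 0 (depending only on s, p). -/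
open Real MeasureTheory Set

/-- The L^p part of the W^{s,p} norm (raised to the power p) on an interval I. -/
noncomputable def lpPart (p : ℝ) (I : Set ℝ) (f : ℝ → ℝ) : ℝ :=
  ∫ x in I, |f x| ^ p

/-- The Gagliardo seminorm (raised to the power p) on an interval I. -/
noncomputable def semPart (s p : ℝ) (I : Set ℝ) (f : ℝ → ℝ) : ℝ :=
  ∫ q in I ×ˢ I, |f q.1 - f q.2| ^ p / |q.1 - q.2| ^ (1 + s * p)

/-- Membership in W^{s,p}(I): both parts of the norm are finite (integrable). -/
def MemWsp (s p : ℝ) (I : Set ℝ) (f : ℝ → ℝ) : Prop :=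
  IntegrableOn (fun x => |f x| ^ p) I volume ∧
  IntegrableOn (fun q : ℝ × ℝ => |f q.1 - f q.2| ^ p / |q.1 - q.2| ^ (1 + s * p))
    (I ×ˢ I) volume

namespace Stmt18Aux

/-- (x,y) ↦ (-x,-y) as a measurable equiv. -/
def negBoth : (ℝ × ℝ) ≃ᵐ (ℝ × ℝ) where
  toFun q := (-q.1, -q.2)
  invFun q := (-q.1, -q.2)
  left_inv q := by simp
  right_inv q := by simp
  measurable_toFun := (measurable_fst.neg.prodMk measurable_snd.neg)
  measurable_invFun := (measurable_fst.neg.prodMk measurable_snd.neg)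

def negFst : (ℝ × ℝ) ≃ᵐ (ℝ × ℝ) where
  toFun q := (-q.1, q.2)
  invFun q := (-q.1, q.2)
  left_inv q := by simp
  right_inv q := by simp
  measurable_toFun := (measurable_fst.neg.prodMk measurable_snd)
  measurable_invFun := (measurable_fst.neg.prodMk measurable_snd)

def negSnd : (ℝ × ℝ) ≃ᵐ (ℝ × ℝ) where
  toFun q := (q.1, -q.2)
  invFun q := (q.1, -q.2)
  left_inv q := by simp
  right_inv q := by simp
  measurable_toFun := (measurable_fst.prodMk measurable_snd.neg)
  measurable_invFun := (measurable_fst.prodMk measurable_snd.neg)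

lemma mpBoth : MeasurePreserving (fun q : ℝ × ℝ => (-q.1, -q.2)) volume volume := by
  rw [show (volume : Measure (ℝ × ℝ)) = (volume : Measure ℝ).prod volume from
    Measure.volume_eq_prod ..]
  exact (Measure.measurePreserving_neg _).prod (Measure.measurePreserving_neg _)

lemma mpFst : MeasurePreserving (fun q : ℝ × ℝ => (-q.1, q.2)) volume volume := by
  rw [show (volume : Measure (ℝ × ℝ)) = (volume : Measure ℝ).prod volume from
    Measure.volume_eq_prod ..]
  exact (Measure.measurePreserving_neg _).prod (MeasurePreserving.id _)

lemma mpSnd : MeasurePreserving (fun q : ℝ × ℝ => (q.1, -q.2)) volume volume := by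
  rw [show (volume : Measure (ℝ × ℝ)) = (volume : Measure ℝ).prod volume from
    Measure.volume_eq_prod ..]
  exact (MeasurePreserving.id _).prod (Measure.measurePreserving_neg _)

lemma preBoth : (fun q : ℝ × ℝ => (-q.1, -q.2)) ⁻¹' (Ioo 0 π ×ˢ Ioo 0 π)
    = Ioo (-π) 0 ×ˢ Ioo (-π) 0 := by
  ext ⟨x, y⟩
  simp only [mem_preimage, prodMk_mem_set_prod_eq, mem_Ioo]
  constructor
  · rintro ⟨⟨a, b⟩, c, d⟩; exact ⟨⟨by linarith, by linarith⟩, by linarith, by linarith⟩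
  · rintro ⟨⟨a, b⟩, c, d⟩; exact ⟨⟨by linarith, by linarith⟩, by linarith, by linarith⟩

lemma preFst : (fun q : ℝ × ℝ => (-q.1, q.2)) ⁻¹' (Ioo 0 π ×ˢ Ioo 0 π)
    = Ioo (-π) 0 ×ˢ Ioo 0 π := by
  ext ⟨x, y⟩
  simp only [mem_preimage, prodMk_mem_set_prod_eq, mem_Ioo]
  constructor
  · rintro ⟨⟨a, b⟩, c, d⟩; exact ⟨⟨by linarith, by linarith⟩, c, d⟩
  · rintro ⟨⟨a, b⟩, c, d⟩; exact ⟨⟨by linarith, by linarith⟩, c, d⟩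

lemma preSnd : (fun q : ℝ × ℝ => (q.1, -q.2)) ⁻¹' (Ioo 0 π ×ˢ Ioo 0 π)
    = Ioo 0 π ×ˢ Ioo (-π) 0 := by
  ext ⟨x, y⟩
  simp only [mem_preimage, prodMk_mem_set_prod_eq, mem_Ioo]
  constructor
  · rintro ⟨⟨a, b⟩, c, d⟩; exact ⟨⟨a, b⟩, by linarith, by linarith⟩
  · rintro ⟨⟨a, b⟩, c, d⟩; exact ⟨⟨a, b⟩, by linarith, by linarith⟩

lemma preNeg : (Neg.neg : ℝ → ℝ) ⁻¹' (Ioo 0 π) = Ioo (-π) 0 := by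
  ext x
  simp only [mem_preimage, mem_Ioo]
  constructor
  · rintro ⟨a, b⟩; exact ⟨by linarith, by linarith⟩
  · rintro ⟨a, b⟩; exact ⟨by linarith, by linarith⟩

end Stmt18Aux

open Stmt18Aux in
/-- the even extension f̃(θ) = f(|θ|) of f ∈ W^{s,p}(0,π) belongs to
W^{s,p}(−π,π) with ‖f̃‖ ≤ C‖f‖, C depending only on s and p. -/
theorem stmt18 (s p : ℝ) (hs0 : 0 < s) (hs1 : s < 1) (hp : 1 ≤ p) :
    ∃ C > 0, ∀ f : ℝ → ℝ, MemWsp s p (Ioo 0 π) f →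
      MemWsp s p (Ioo (-π) π) (fun θ => f |θ|) ∧
      (lpPart p (Ioo (-π) π) (fun θ => f |θ|)
        + semPart s p (Ioo (-π) π) (fun θ => f |θ|)) ^ (1/p)
      ≤ C * (lpPart p (Ioo 0 π) f + semPart s p (Ioo 0 π) f) ^ (1/p) := by
  have hp0 : (0:ℝ) < p := lt_of_lt_of_le one_pos hp
  have he : (0:ℝ) < 1 + s * p := by positivity
  have hπ : (0:ℝ) < π := pi_pos
  refine ⟨4, by norm_num, fun f hf => ?_⟩
  obtain ⟨hfL, hfS⟩ := hf
  set Ip : Set ℝ := Ioo 0 π with hIp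
  set Im : Set ℝ := Ioo (-π) 0 with hIm
  set I : Set ℝ := Ioo (-π) π with hI
  set g : ℝ → ℝ := fun θ => f |θ| with hg
  set G : ℝ × ℝ → ℝ := fun q => |f q.1 - f q.2| ^ p / |q.1 - q.2| ^ (1 + s * p) with hG
  set H : ℝ × ℝ → ℝ := fun q => |f q.1 - f q.2| ^ p / (q.1 + q.2) ^ (1 + s * p) with hH
  set K : ℝ × ℝ → ℝ := fun q => |g q.1 - g q.2| ^ p / |q.1 - q.2| ^ (1 + s * p) with hK
  set φ : ℝ → ℝ := fun x => |f x| ^ p with hφ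
  set ψ : ℝ → ℝ := fun x => |g x| ^ p with hψ
  have hmIp : MeasurableSet Ip := measurableSet_Ioo
  have hmIm : MeasurableSet Im := measurableSet_Ioo
  have hmQpp : MeasurableSet (Ip ×ˢ Ip) := hmIp.prod hmIp
  have hdmp : Disjoint Im Ip := by
    rw [Set.disjoint_left]; rintro x ⟨_, h2⟩ ⟨h3, _⟩; linarith
  -- the interval (-π, π) is a.e. equal to Im ∪ Ip
  have hIeq : I = (Im ∪ Ip) ∪ {(0:ℝ)} := by
    ext x
    simp only [hI, hIm, hIp, mem_union, mem_Ioo, mem_singleton_iff]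
    constructor
    · rintro ⟨a, b⟩
      rcases lt_trichotomy x 0 with h | h | h
      · exact Or.inl (Or.inl ⟨a, h⟩)
      · exact Or.inr h
      · exact Or.inl (Or.inr ⟨h, b⟩)
    · rintro ((⟨a, b⟩ | ⟨a, b⟩) | rfl)
      · exact ⟨a, by linarith⟩
      · exact ⟨by linarith, b⟩
      · exact ⟨by linarith, hπ⟩
  have hIae : I =ᵐ[volume] ((Im ∪ Ip : Set ℝ)) := by
    rw [hIeq]
    exact union_ae_eq_left_of_ae_eq_empty (ae_eq_empty.mpr (measure_singleton 0))
  -- L^p part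
  have hψp : EqOn ψ φ Ip := fun x hx => by
    simp only [hψ, hφ, hg, abs_of_pos hx.1]
  have hψm : EqOn ψ (fun x => φ (-x)) Im := fun x hx => by
    simp only [hψ, hφ, hg, abs_of_neg hx.2]
  have hφneg : IntegrableOn (fun x => φ (-x)) Im volume := by
    have := (Measure.measurePreserving_neg (volume : Measure ℝ)).integrableOn_comp_preimage
      (measurableEmbedding_neg) (f := φ) (s := Ip)
    rw [preNeg] at this
    exact this.mpr hfL
  have hψIm : IntegrableOn ψ Im volume := hφneg.congr_fun hψm.symm hmIm
  have hψIp : IntegrableOn ψ Ip volume := hfL.congr_fun hψp.symm hmIp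
  have hψI : IntegrableOn ψ I volume := (hψIm.union hψIp).congr_set_ae hIae
  have hlpval : lpPart p I g = 2 * lpPart p Ip f := by
    have h1 : lpPart p I g = ∫ x in Im ∪ Ip, ψ x := setIntegral_congr_set hIae
    have h2 : (∫ x in Im ∪ Ip, ψ x) = (∫ x in Im, ψ x) + ∫ x in Ip, ψ x :=
      setIntegral_union hdmp hmIp hψIm hψIp
    have h3 : (∫ x in Im, ψ x) = ∫ x in Ip, φ x := by
      rw [setIntegral_congr_fun hmIm hψm]
      have := (Measure.measurePreserving_neg (volume : Measure ℝ)).setIntegral_preimage_emb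
        (measurableEmbedding_neg) φ Ip
      rw [preNeg] at this
      exact this
    have h4 : (∫ x in Ip, ψ x) = ∫ x in Ip, φ x := setIntegral_congr_fun hmIp hψp
    rw [h1, h2, h3, h4]; unfold lpPart; ring
  -- quadrant decomposition of the square
  have hQeq : I ×ˢ I = (((Im ×ˢ Im) ∪ (Im ×ˢ Ip)) ∪ ((Ip ×ˢ Im) ∪ (Ip ×ˢ Ip)))
      ∪ (({(0:ℝ)} ×ˢ I) ∪ (I ×ˢ {(0:ℝ)})) := by
    ext ⟨x, y⟩
    simp only [hI, hIm, hIp, prodMk_mem_set_prod_eq, mem_union, mem_Ioo, mem_singleton_iff]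
    constructor
    · rintro ⟨⟨a, b⟩, c, d⟩
      rcases lt_trichotomy x 0 with h | h | h
      · rcases lt_trichotomy y 0 with h' | h' | h'
        · exact Or.inl (Or.inl (Or.inl ⟨⟨a, h⟩, c, h'⟩))
        · exact Or.inr (Or.inr ⟨⟨a, by linarith⟩, h'⟩)
        · exact Or.inl (Or.inl (Or.inr ⟨⟨a, h⟩, h', d⟩))
      · exact Or.inr (Or.inl ⟨h, c, d⟩)
      · rcases lt_trichotomy y 0 with h' | h' | h'
        · exact Or.inl (Or.inr (Or.inl ⟨⟨h, b⟩, c, h'⟩))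
        · exact Or.inr (Or.inr ⟨⟨a, b⟩, h'⟩)
        · exact Or.inl (Or.inr (Or.inr ⟨⟨h, b⟩, h', d⟩))
    · rintro ((((⟨⟨a, b⟩, c, d⟩ | ⟨⟨a, b⟩, c, d⟩) | (⟨⟨a, b⟩, c, d⟩ | ⟨⟨a, b⟩, c, d⟩))) |
        (⟨rfl, c, d⟩ | ⟨⟨a, b⟩, rfl⟩)) <;>
      exact ⟨⟨by linarith, by linarith⟩, by linarith, by linarith⟩
  have hQae : I ×ˢ I =ᵐ[volume]
      (((((Im ×ˢ Im) ∪ (Im ×ˢ Ip)) ∪ ((Ip ×ˢ Im) ∪ (Ip ×ˢ Ip))) : Set (ℝ × ℝ))) := by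
    rw [hQeq]
    refine union_ae_eq_left_of_ae_eq_empty (ae_eq_empty.mpr (measure_union_null ?_ ?_))
    · rw [show (volume : Measure (ℝ × ℝ)) = (volume : Measure ℝ).prod volume from
        Measure.volume_eq_prod .., Measure.prod_prod, Real.volume_singleton, zero_mul]
    · rw [show (volume : Measure (ℝ × ℝ)) = (volume : Measure ℝ).prod volume from
        Measure.volume_eq_prod .., Measure.prod_prod, Real.volume_singleton, mul_zero]
  -- EqOn facts for K on quadrants
  have hKpp : EqOn K G (Ip ×ˢ Ip) := by
    rintro ⟨x, y⟩ ⟨⟨a, _⟩, c, _⟩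
    simp only [hK, hG, hg, abs_of_pos a, abs_of_pos c]
  have hKmm : EqOn K (fun q => G (-q.1, -q.2)) (Im ×ˢ Im) := by
    rintro ⟨x, y⟩ ⟨⟨_, b⟩, _, d⟩
    simp only [hK, hG, hg, abs_of_neg b, abs_of_neg d]
    rw [show -x - -y = -(x - y) by ring, abs_neg]
  have hKpm : EqOn K (fun q => H (q.1, -q.2)) (Ip ×ˢ Im) := by
    rintro ⟨x, y⟩ ⟨⟨a, _⟩, _, d⟩
    simp only [hK, hH, hg, abs_of_pos a, abs_of_neg d]
    rw [abs_of_pos (by linarith : (0:ℝ) < x - y)]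
    ring_nf
  have hKmp : EqOn K (fun q => H (-q.1, q.2)) (Im ×ˢ Ip) := by
    rintro ⟨x, y⟩ ⟨⟨_, b⟩, c, _⟩
    simp only [hK, hH, hg, abs_of_neg b, abs_of_pos c]
    rw [abs_of_neg (by linarith : x - y < 0)]
    ring_nf
  -- integrability of H on the (+,+) quadrant
  set m : ℝ × ℝ → ℝ := fun q => |q.1 - q.2| ^ (1 + s * p) / (q.1 + q.2) ^ (1 + s * p) with hm
  have hm_meas : Measurable m := by
    exact ((Real.continuous_rpow_const he.le).measurable.comp
        (measurable_fst.sub measurable_snd).abs).div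
      ((Real.continuous_rpow_const he.le).measurable.comp (measurable_fst.add measurable_snd))
  have hHGm : ∀ q : ℝ × ℝ, H q = G q * m q := by
    intro q
    by_cases hq : q.1 = q.2
    · simp [hH, hG, hm, hq, sub_self, abs_zero, Real.zero_rpow hp0.ne',
        Real.zero_rpow he.ne']
    · have hb : (0:ℝ) < |q.1 - q.2| ^ (1 + s * p) :=
        Real.rpow_pos_of_pos (abs_pos.mpr (sub_ne_zero.mpr hq)) _
      simp only [hH, hG, hm]
      rw [div_mul_div_comm, mul_comm (|f q.1 - f q.2| ^ p), mul_div_mul_left _ _ hb.ne']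
  have hHleG : ∀ q ∈ Ip ×ˢ Ip, 0 ≤ H q ∧ H q ≤ G q := by
    rintro ⟨x, y⟩ ⟨⟨a, _⟩, c, _⟩
    have hsum : (0:ℝ) < x + y := by linarith
    constructor
    · exact div_nonneg (Real.rpow_nonneg (abs_nonneg _) _) (Real.rpow_nonneg hsum.le _)
    · by_cases hq : x = y
      · simp [hH, hG, hq, sub_self, abs_zero, Real.zero_rpow hp0.ne']
      · have habs : (0:ℝ) < |x - y| := abs_pos.mpr (sub_ne_zero.mpr hq)
        have hle : |x - y| ≤ x + y := abs_le.mpr ⟨by linarith, by linarith⟩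
        have hrle : |x - y| ^ (1 + s * p) ≤ (x + y) ^ (1 + s * p) :=
          Real.rpow_le_rpow habs.le hle he.le
        have hrpos : (0:ℝ) < |x - y| ^ (1 + s * p) := Real.rpow_pos_of_pos habs _
        exact div_le_div_of_nonneg_left (Real.rpow_nonneg (abs_nonneg _) _) hrpos hrle
  have hH_aesm : AEStronglyMeasurable H (volume.restrict (Ip ×ˢ Ip)) := by
    rw [show H = fun q => G q * m q from funext hHGm]
    exact hfS.1.mul hm_meas.aestronglyMeasurable
  have hH_int : IntegrableOn H (Ip ×ˢ Ip) volume := by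
    refine Integrable.mono' hfS hH_aesm ?_
    refine ae_restrict_of_forall_mem hmQpp fun q hq => ?_
    rw [Real.norm_eq_abs, abs_of_nonneg (hHleG q hq).1]
    exact (hHleG q hq).2
  have hHint_le : (∫ q in Ip ×ˢ Ip, H q) ≤ ∫ q in Ip ×ˢ Ip, G q :=
    setIntegral_mono_on hH_int hfS hmQpp fun q hq => (hHleG q hq).2
  -- integrability of K on the four quadrants
  have hGmm : IntegrableOn (fun q : ℝ × ℝ => G (-q.1, -q.2)) (Im ×ˢ Im) volume := by
    have := mpBoth.integrableOn_comp_preimage negBoth.measurableEmbedding (f := G)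
      (s := Ip ×ˢ Ip)
    rw [hIp] at this
    rw [preBoth] at this
    exact this.mpr hfS
  have hHmp : IntegrableOn (fun q : ℝ × ℝ => H (-q.1, q.2)) (Im ×ˢ Ip) volume := by
    have := mpFst.integrableOn_comp_preimage negFst.measurableEmbedding (f := H)
      (s := Ip ×ˢ Ip)
    rw [hIp] at this
    rw [preFst] at this
    exact this.mpr hH_int
  have hHpm : IntegrableOn (fun q : ℝ × ℝ => H (q.1, -q.2)) (Ip ×ˢ Im) volume := by
    have := mpSnd.integrableOn_comp_preimage negSnd.measurableEmbedding (f := H)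
      (s := Ip ×ˢ Ip)
    rw [hIp] at this
    rw [preSnd] at this
    exact this.mpr hH_int
  have hKint_pp : IntegrableOn K (Ip ×ˢ Ip) volume := hfS.congr_fun hKpp.symm hmQpp
  have hKint_mm : IntegrableOn K (Im ×ˢ Im) volume :=
    hGmm.congr_fun hKmm.symm (hmIm.prod hmIm)
  have hKint_pm : IntegrableOn K (Ip ×ˢ Im) volume :=
    hHpm.congr_fun hKpm.symm (hmIp.prod hmIm)
  have hKint_mp : IntegrableOn K (Im ×ˢ Ip) volume :=
    hHmp.congr_fun hKmp.symm (hmIm.prod hmIp)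
  have hKunion : IntegrableOn K
      ((((Im ×ˢ Im) ∪ (Im ×ˢ Ip)) ∪ ((Ip ×ˢ Im) ∪ (Ip ×ˢ Ip)))) volume :=
    (hKint_mm.union hKint_mp).union (hKint_pm.union hKint_pp)
  have hKI : IntegrableOn K (I ×ˢ I) volume := hKunion.congr_set_ae hQae
  -- value of the seminorm part
  have hsemval : semPart s p I g ≤ 4 * semPart s p Ip f := by
    have e1 : semPart s p I g =
        ∫ q in (((Im ×ˢ Im) ∪ (Im ×ˢ Ip)) ∪ ((Ip ×ˢ Im) ∪ (Ip ×ˢ Ip))), K q :=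
      setIntegral_congr_set hQae
    have e2 : (∫ q in (((Im ×ˢ Im) ∪ (Im ×ˢ Ip)) ∪ ((Ip ×ˢ Im) ∪ (Ip ×ˢ Ip))), K q)
        = ((∫ q in Im ×ˢ Im, K q) + ∫ q in Im ×ˢ Ip, K q)
          + ((∫ q in Ip ×ˢ Im, K q) + ∫ q in Ip ×ˢ Ip, K q) := by
      have hdp1 : ∀ t₁ t₂ : Set ℝ, Disjoint (Im ×ˢ t₁) (Ip ×ˢ t₂) := fun t₁ t₂ =>
        Set.disjoint_prod.mpr (Or.inl hdmp)
      have hdp2 : ∀ s₁ s₂ : Set ℝ, Disjoint (s₁ ×ˢ Im) (s₂ ×ˢ Ip) := fun s₁ s₂ =>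
        Set.disjoint_prod.mpr (Or.inr hdmp)
      rw [setIntegral_union (((hdp1 _ _).union_right (hdp1 _ _)).union_left
          ((hdp1 _ _).union_right (hdp1 _ _))) ((hmIp.prod hmIm).union hmQpp)
        (hKint_mm.union hKint_mp) (hKint_pm.union hKint_pp),
        setIntegral_union (hdp2 _ _) (hmIm.prod hmIp) hKint_mm hKint_mp,
        setIntegral_union (hdp2 _ _) hmQpp hKint_pm hKint_pp]
    have e3 : (∫ q in Ip ×ˢ Ip, K q) = ∫ q in Ip ×ˢ Ip, G q :=
      setIntegral_congr_fun hmQpp hKpp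
    have e4 : (∫ q in Im ×ˢ Im, K q) = ∫ q in Ip ×ˢ Ip, G q := by
      rw [setIntegral_congr_fun (hmIm.prod hmIm) hKmm]
      have := mpBoth.setIntegral_preimage_emb negBoth.measurableEmbedding G (Ip ×ˢ Ip)
      rw [hIp] at this
      rw [preBoth] at this
      exact this
    have e5 : (∫ q in Ip ×ˢ Im, K q) = ∫ q in Ip ×ˢ Ip, H q := by
      rw [setIntegral_congr_fun (hmIp.prod hmIm) hKpm]
      have := mpSnd.setIntegral_preimage_emb negSnd.measurableEmbedding H (Ip ×ˢ Ip)
      rw [hIp] at this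
      rw [preSnd] at this
      exact this
    have e6 : (∫ q in Im ×ˢ Ip, K q) = ∫ q in Ip ×ˢ Ip, H q := by
      rw [setIntegral_congr_fun (hmIm.prod hmIp) hKmp]
      have := mpFst.setIntegral_preimage_emb negFst.measurableEmbedding H (Ip ×ˢ Ip)
      rw [hIp] at this
      rw [preFst] at this
      exact this
    have hsem : semPart s p Ip f = ∫ q in Ip ×ˢ Ip, G q := rfl
    rw [e1, e2, e3, e4, e5, e6, hsem]
    linarith [hHint_le]
  -- nonnegativity
  have hlpf_nonneg : 0 ≤ lpPart p Ip f :=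
    setIntegral_nonneg hmIp fun x _ => Real.rpow_nonneg (abs_nonneg _) _
  have hsemf_nonneg : 0 ≤ semPart s p Ip f :=
    setIntegral_nonneg hmQpp fun q _ =>
      div_nonneg (Real.rpow_nonneg (abs_nonneg _) _) (Real.rpow_nonneg (abs_nonneg _) _)
  have hlpg_nonneg : 0 ≤ lpPart p I g :=
    setIntegral_nonneg measurableSet_Ioo fun x _ => Real.rpow_nonneg (abs_nonneg _) _
  have hsemg_nonneg : 0 ≤ semPart s p I g :=
    setIntegral_nonneg (measurableSet_Ioo.prod measurableSet_Ioo) fun q _ =>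
      div_nonneg (Real.rpow_nonneg (abs_nonneg _) _) (Real.rpow_nonneg (abs_nonneg _) _)
  refine ⟨⟨hψI, hKI⟩, ?_⟩
  -- final arithmetic
  have htot : lpPart p I g + semPart s p I g
      ≤ 4 * (lpPart p Ip f + semPart s p Ip f) := by
    rw [hlpval]; linarith [hsemval]
  calc (lpPart p I g + semPart s p I g) ^ (1/p)
      ≤ (4 * (lpPart p Ip f + semPart s p Ip f)) ^ (1/p) :=
        Real.rpow_le_rpow (by linarith) htot (by positivity)
    _ = 4 ^ (1/p) * (lpPart p Ip f + semPart s p Ip f) ^ (1/p) :=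
        Real.mul_rpow (by norm_num) (by linarith)
    _ ≤ 4 * (lpPart p Ip f + semPart s p Ip f) ^ (1/p) := by
        refine mul_le_mul_of_nonneg_right ?_ (Real.rpow_nonneg (by linarith) _)
        calc (4:ℝ) ^ (1/p) ≤ 4 ^ (1:ℝ) :=
              Real.rpow_le_rpow_of_exponent_le (by norm_num)
                (by rw [div_le_one hp0]; exact hp)
          _ = 4 := Real.rpow_one 4
end
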